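/- Let β ∈ [1/2, log₂(3/2)], let C_β = 2·√(2^{β+1} − 2), and define B(t) = C_β · t(1 − t). Then for all real numbers x, y with 0 ≤ y ≤ 1 and 0 ≤ x ≤ y − B(y), one has (y − x) + (2^β − 1)·B(y) + B(x) ≥ 2·B((x + y)/2). -/
import Mathlib


/-- The quadratic polynomial `B(t) = C_β t(1−t)` with `C_β = 2√(2^{β+1} − 2)`. -/
noncomputable def Bquad (β t : ℝ) : ℝ := 2 * Real.sqrt ((2 : ℝ) ^ (β + 1) - 2) * (t * (1 - t))

/-- for `β ∈ [1/2, log₂(3/2)]`, `0 ≤ y ≤ 1` and `0 ≤ x ≤ y − B(y)`,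
`(y−x) + (2^β − 1) B(y) + B(x) ≥ 2 B((x+y)/2)`. -/
theorem two_point_quad_linear (β : ℝ) (hβ : β ∈ Set.Icc (1 / 2 : ℝ) (Real.logb 2 (3 / 2)))
    (x y : ℝ) (hy0 : 0 ≤ y) (hy1 : y ≤ 1) (hx0 : 0 ≤ x) (hx : x ≤ y - Bquad β y) :
    (y - x) + ((2 : ℝ) ^ β - 1) * Bquad β y + Bquad β x ≥ 2 * Bquad β ((x + y) / 2) := by
  obtain ⟨hβl, hβr⟩ := hβ
  have h2pos : (0:ℝ) < 2 := two_pos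
  set u : ℝ := (2:ℝ) ^ β with hu
  set c : ℝ := Real.sqrt ((2:ℝ) ^ (β + 1) - 2) with hcdef
  have hrw : (2:ℝ) ^ (β + 1) = 2 * u := by
    rw [hu, Real.rpow_add h2pos, Real.rpow_one]; ring
  have hu1 : 1 ≤ u := by
    have h := Real.rpow_le_rpow_of_exponent_le (one_le_two) (show (0:ℝ) ≤ β by linarith)
    simpa [Real.rpow_zero] using h
  have hu32 : u ≤ 3 / 2 := by
    have h1 : (2:ℝ) ^ β ≤ 2 ^ Real.logb 2 (3 / 2) :=
      Real.rpow_le_rpow_of_exponent_le one_le_two hβr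
    rwa [Real.rpow_logb h2pos (by norm_num) (by norm_num)] at h1
  have hnn : 0 ≤ (2:ℝ) ^ (β + 1) - 2 := by rw [hrw]; linarith
  have hcnn : 0 ≤ c := Real.sqrt_nonneg _
  have hc2 : c ^ 2 = 2 * u - 2 := by rw [hcdef, Real.sq_sqrt hnn, hrw]
  simp only [Bquad] at hx ⊢
  rw [← hcdef] at hx ⊢
  have hy' : (0:ℝ) ≤ 1 - y := by linarith
  have ha_nn : 0 ≤ 2 * c * (y * (1 - y)) := by positivity
  have hda : 2 * c * (y * (1 - y)) ≤ y - x := by linarith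
  have hdy : y - x ≤ y := by linarith
  -- endpoint at d = a := 2c y(1-y)
  have key : (2*c*(y*(1-y))) + (u-2)*(2*c*(y*(1-y))) - c*(2*c*(y*(1-y)))^2
      = c^3*(y*(1-y))*(1-2*y)^2 := by
    linear_combination (-(c*(y*(1-y)))) * hc2
  have hfa : 0 ≤ (2*c*(y*(1-y))) + (u-2)*(2*c*(y*(1-y))) - c*(2*c*(y*(1-y)))^2 := by
    rw [key]; positivity
  -- endpoint at d = y
  have hfb : 0 ≤ y + (u-2)*(2*c*(y*(1-y))) - c*y^2 := by
    rcases hy0.eq_or_lt with h0 | h0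
    · rw [← h0]; ring_nf; simp
    · have hs1 : 2 * c * (1 - y) ≤ 1 := by nlinarith [hda, hx0]
      have hucc : c ≤ u - 1/2 := by nlinarith [hc2, sq_nonneg (u - 3/2), hcnn, hu1]
      have hg : 0 ≤ 1 - c*y + 2*c*(u-2)*(1-y) := by
        nlinarith [mul_nonneg (by linarith : (0:ℝ) ≤ 1 - 2*c*(1-y))
          (by linarith : (0:ℝ) ≤ 3/2 - u), hucc]
      nlinarith [mul_nonneg hy0 hg]
  rcases le_or_gt (2 * c * (y - x)) 1 with h | h
  · have hca : c * (2*c*(y*(1-y))) ≤ c * (y - x) := mul_le_mul_of_nonneg_left hda hcnn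
    have h1 : 0 ≤ ((y-x) - 2*c*(y*(1-y))) * (1 - c*((y-x) + 2*c*(y*(1-y)))) :=
      mul_nonneg (by linarith) (by linarith)
    linarith [hfa, h1]
  · have hcy : c * (y - x) ≤ c * y := mul_le_mul_of_nonneg_left hdy hcnn
    have h2 : 0 ≤ (y - (y-x)) * (c*((y-x) + y) - 1) :=
      mul_nonneg (by linarith) (by linarith)
    linarith [hfb, h2]
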